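/- For any positive integers x, y, r, R, the power series expansion of 1/((1-q^x)(1-q^y)(1-q^{rx+Ry})) - 1/((1-q^{rx})(1-q^{Ry})(1-q^{x+y})) has all coefficients nonnegative. -/

import Mathlib

open PowerSeries Finset

private noncomputable def S (a : ℕ) : ℚ⟦X⟧ := PowerSeries.mk fun n => if a ∣ n then 1 else 0

private lemma one_sub_mul_S {a : ℕ} (ha : 0 < a) : (1 - (X : ℚ⟦X⟧) ^ a) * S a = 1 := by
  ext n
  rw [sub_mul, one_mul, map_sub]
  simp only [coeff_X_pow_mul', S, coeff_mk, coeff_one]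
  rcases Nat.eq_zero_or_pos n with rfl | hn
  · simp [Nat.not_succ_le_zero, ha.ne', Nat.not_lt.mpr]
  · by_cases h : a ≤ n
    · have hiff : a ∣ n ↔ a ∣ n - a := by
        constructor
        · intro hd; exact Nat.dvd_sub hd dvd_rfl
        · intro hd
          have : n - a + a = n := Nat.sub_add_cancel h
          exact this ▸ Dvd.dvd.add hd dvd_rfl
      simp only [if_pos h, ← hiff, if_neg hn.ne', sub_self]
    · have hnd : ¬ a ∣ n := fun hd => h (Nat.le_of_dvd hn hd)
      simp [h, hnd, hn.ne']

private lemma inv_triple {a b c : ℕ} (ha : 0 < a) (hb : 0 < b) (hc : 0 < c) :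
    ((1 - (X : ℚ⟦X⟧) ^ a) * (1 - X ^ b) * (1 - X ^ c))⁻¹ = S a * S b * S c := by
  rw [PowerSeries.inv_eq_iff_mul_eq_one]
  · calc (S a * S b * S c) * ((1 - (X : ℚ⟦X⟧) ^ a) * (1 - X ^ b) * (1 - X ^ c))
        = ((1 - (X : ℚ⟦X⟧) ^ a) * S a) * ((1 - X ^ b) * S b) * ((1 - X ^ c) * S c) := by ring
      _ = 1 := by rw [one_sub_mul_S ha, one_sub_mul_S hb, one_sub_mul_S hc]; ring
  · simp [constantCoeff_X, ha.ne', hb.ne', hc.ne', zero_pow]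

private def P (a b c n : ℕ) : Finset (ℕ × ℕ) :=
  (range (n+1) ×ˢ range (n+1)).filter fun p =>
    p.1 + p.2 ≤ n ∧ a ∣ p.1 ∧ b ∣ p.2 ∧ c ∣ (n - p.1 - p.2)

private lemma coeff_SSS (a b c n : ℕ) :
    coeff n (S a * S b * S c) = (P a b c n).card := by
  rw [coeff_mul, Finset.Nat.sum_antidiagonal_eq_sum_range_succ_mk]
  simp only [coeff_mul, Finset.sum_mul, Finset.Nat.sum_antidiagonal_eq_sum_range_succ_mk,
    S, coeff_mk]
  have hcard : ((P a b c n).card : ℚ)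
      = ∑ p ∈ (range (n+1) ×ˢ range (n+1)).filter (fun p => p.1 + p.2 ≤ n),
          (if a ∣ p.1 ∧ b ∣ p.2 ∧ c ∣ (n - p.1 - p.2) then (1:ℚ) else 0) := by
    rw [Finset.sum_boole]
    congr 1
    rw [P, Finset.filter_filter]
  rw [hcard]
  have hsig := Finset.sum_sigma' (range (n+1)) (fun u => range (u+1))
    (fun u i => ((if a ∣ i then (1:ℚ) else 0) * if b ∣ u - i then 1 else 0) *
      if c ∣ n - u then 1 else 0)
  rw [Nat.succ_eq_add_one, hsig]
  apply Finset.sum_nbij' (i := fun q : Σ _ : ℕ, ℕ => (q.2, q.1 - q.2))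
      (j := fun p : ℕ × ℕ => ⟨p.1 + p.2, p.1⟩)
  · rintro ⟨u, i⟩ hq
    simp only [Finset.mem_sigma, Finset.mem_range] at hq
    simp only [Finset.mem_filter, Finset.mem_product, Finset.mem_range]
    omega
  · rintro ⟨i, j⟩ hp
    simp only [Finset.mem_filter, Finset.mem_product, Finset.mem_range] at hp
    simp only [Finset.mem_sigma, Finset.mem_range]
    omega
  · rintro ⟨u, i⟩ hq
    simp only [Finset.mem_sigma, Finset.mem_range] at hq
    simp only [Sigma.mk.inj_iff]
    constructor
    · omega
    · exact heq_of_eq rfl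
  · rintro ⟨i, j⟩ hp
    simp only [Prod.mk.injEq, add_tsub_cancel_left, true_and]
  · rintro ⟨u, i⟩ hq
    simp only [Finset.mem_sigma, Finset.mem_range] at hq
    have h1 : n - i - (u - i) = n - u := by omega
    rw [h1]
    by_cases ha : a ∣ i <;> by_cases hb : b ∣ (u - i) <;> by_cases hc : c ∣ (n - u) <;>
      simp [ha, hb, hc]

private def phi (x y r R n : ℕ) (p : ℕ × ℕ) : ℕ × ℕ :=
  (x * (r * (p.1 / (r*x) - min (p.1 / (r*x)) (p.2 / (R*y))) + (n - p.1 - p.2) / (x+y)),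
   y * (R * (p.2 / (R*y) - min (p.1 / (r*x)) (p.2 / (R*y))) + (n - p.1 - p.2) / (x+y)))

private lemma cancel_lemma {r R i1 j1 k1 i2 j2 k2 : ℕ} (hr : 0 < r) (hR : 0 < R)
    (hA : r*i1+k1 = r*i2+k2) (hB : R*j1+k1 = R*j2+k2)
    (h1 : i1 = 0 ∨ j1 = 0) (h2 : i2 = 0 ∨ j2 = 0) :
    i1 = i2 ∧ j1 = j2 ∧ k1 = k2 := by
  have key : ∀ a b k1 k2 : ℕ, k1 = a + k2 → b + k1 = k2 → a = 0 ∧ b = 0 := by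
    intros; omega
  rcases h1 with rfl | rfl <;> rcases h2 with rfl | rfl
  · simp only [Nat.mul_zero, Nat.zero_add] at hA
    subst hA
    have := Nat.add_right_cancel hB
    exact ⟨rfl, Nat.eq_of_mul_eq_mul_left hR this, rfl⟩
  · simp only [Nat.mul_zero, Nat.zero_add] at hA hB
    obtain ⟨ha0, hb0⟩ := key (r*i2) (R*j1) k1 k2 hA hB
    have hi2 : i2 = 0 := by
      rcases Nat.mul_eq_zero.mp ha0 with h | h
      · omega
      · exact h
    have hj1 : j1 = 0 := by
      rcases Nat.mul_eq_zero.mp hb0 with h | h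
      · omega
      · exact h
    subst hi2; subst hj1
    simp only [Nat.mul_zero, Nat.zero_add] at hA hB
    exact ⟨rfl, rfl, by omega⟩
  · simp only [Nat.mul_zero, Nat.zero_add] at hA hB
    obtain ⟨ha0, hb0⟩ := key (R*j2) (r*i1) k1 k2 hB hA
    have hj2 : j2 = 0 := by
      rcases Nat.mul_eq_zero.mp ha0 with h | h
      · omega
      · exact h
    have hi1 : i1 = 0 := by
      rcases Nat.mul_eq_zero.mp hb0 with h | h
      · omega
      · exact h
    subst hj2; subst hi1
    simp only [Nat.mul_zero, Nat.zero_add] at hA hB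
    exact ⟨rfl, rfl, by omega⟩
  · simp only [Nat.mul_zero, Nat.zero_add] at hB
    subst hB
    have := Nat.add_right_cancel hA
    exact ⟨Nat.eq_of_mul_eq_mul_left hr this, rfl, rfl⟩

private lemma phi_spec {x y r R n : ℕ} (hx : 0 < x) (hy : 0 < y)
    (hr : 0 < r) (hR : 0 < R) {p : ℕ × ℕ} (hp : p ∈ P (r*x) (R*y) (x+y) n) :
    ∃ i' j' k m, (i' = 0 ∨ j' = 0) ∧
      phi x y r R n p = (x*(r*i'+k), y*(R*j'+k)) ∧
      p.1 = r*x*(i'+m) ∧ p.2 = R*y*(j'+m) ∧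
      x*(r*i'+k) + y*(R*j'+k) + (r*x+R*y)*m = n := by
  simp only [P, Finset.mem_filter, Finset.mem_product, Finset.mem_range] at hp
  obtain ⟨⟨-, -⟩, hle, hd1, hd2, hd3⟩ := hp
  set i := p.1 / (r*x) with hi
  set j := p.2 / (R*y) with hj
  set k := (n - p.1 - p.2) / (x+y) with hk
  set m := min i j with hm
  have e1 : r*x*i = p.1 := Nat.mul_div_cancel' hd1
  have e2 : R*y*j = p.2 := Nat.mul_div_cancel' hd2
  have e3 : (x+y)*k = n - p.1 - p.2 := Nat.mul_div_cancel' hd3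
  have hm1 : m ≤ i := min_le_left _ _
  have hm2 : m ≤ j := min_le_right _ _
  refine ⟨i - m, j - m, k, m, by omega, rfl, ?_, ?_, ?_⟩
  · rw [show i - m + m = i by omega, e1]
  · rw [show j - m + m = j by omega, e2]
  · have hsub : i - m + m = i := by omega
    have hsub2 : j - m + m = j := by omega
    have : x*(r*(i-m)+k) + y*(R*(j-m)+k) + (r*x+R*y)*m
        = r*x*((i-m)+m) + R*y*((j-m)+m) + (x+y)*k := by ring
    rw [this, hsub, hsub2, e1, e2, e3]
    omega

private lemma card_le_card (x y r R : ℕ) (hx : 0 < x) (hy : 0 < y)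
    (hr : 0 < r) (hR : 0 < R) (n : ℕ) :
    (P (r * x) (R * y) (x + y) n).card ≤ (P x y (r * x + R * y) n).card := by
  apply Finset.card_le_card_of_injOn (phi x y r R n)
  · intro p hp
    obtain ⟨i', j', k, m, -, heq, -, -, hsum⟩ := phi_spec hx hy hr hR hp
    simp only [P, Finset.coe_filter, Set.mem_setOf_eq, Finset.mem_filter, Finset.mem_product, Finset.mem_range, heq]
    have hq1 : x*(r*i'+k) + y*(R*j'+k) ≤ n := Nat.le.intro hsum
    refine ⟨⟨by omega, by omega⟩, by omega, Dvd.intro _ rfl, Dvd.intro _ rfl, ?_⟩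
    have : n - x*(r*i'+k) - y*(R*j'+k) = (r*x+R*y)*m := by omega
    rw [this]
    exact Dvd.intro _ rfl
  · intro p hp q hq hpq
    obtain ⟨i1, j1, k1, m1, hz1, heq1, hp1, hp2, hsum1⟩ := phi_spec hx hy hr hR hp
    obtain ⟨i2, j2, k2, m2, hz2, heq2, hq1, hq2, hsum2⟩ := phi_spec hx hy hr hR hq
    rw [heq1, heq2, Prod.mk.injEq] at hpq
    obtain ⟨ha, hb⟩ := hpq
    have hA : r*i1+k1 = r*i2+k2 := Nat.eq_of_mul_eq_mul_left hx ha
    have hB : R*j1+k1 = R*j2+k2 := Nat.eq_of_mul_eq_mul_left hy hb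
    have hm : m1 = m2 := by
      have h1 : x*(r*i1+k1) + y*(R*j1+k1) + (r*x+R*y)*m1
          = x*(r*i1+k1) + y*(R*j1+k1) + (r*x+R*y)*m2 := by
        rw [hsum1, hA, hB, hsum2]
      have h2 := Nat.add_left_cancel h1
      exact Nat.eq_of_mul_eq_mul_left (by positivity) h2
    obtain ⟨hi, hj, -⟩ := cancel_lemma hr hR hA hB hz1 hz2
    have : p.1 = q.1 := by rw [hp1, hq1, hi, hm]
    have : p.2 = q.2 := by rw [hp2, hq2, hj, hm]
    exact Prod.ext ‹p.1 = q.1› ‹p.2 = q.2›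

theorem dominant_xy_L1 (x y r R : ℕ) (hx : 0 < x) (hy : 0 < y)
    (hr : 0 < r) (hR : 0 < R) (n : ℕ) :
    0 ≤ PowerSeries.coeff n
      (((1 - (X : ℚ⟦X⟧) ^ x) * (1 - X ^ y) * (1 - X ^ (r * x + R * y)))⁻¹ -
       ((1 - (X : ℚ⟦X⟧) ^ (r * x)) * (1 - X ^ (R * y)) * (1 - X ^ (x + y)))⁻¹) := by
  have h1 : 0 < r * x := Nat.mul_pos hr hx
  have h2 : 0 < R * y := Nat.mul_pos hR hy
  rw [inv_triple hx hy (by omega), inv_triple h1 h2 (by omega), map_sub,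
    coeff_SSS, coeff_SSS, sub_nonneg, Nat.cast_le]
  exact card_le_card x y r R hx hy hr hR n
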